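/- Let α > 0 and n ≥ 1 with α < nπ. Set ρ_{α,n} = cos(α/(2n)) and b_{α,n}(x) = √((1+ρ_{α,n}x)/(1−ρ_{α,n}x)) for x ∈ (−1,1). Let T_n(χ_{α/n}) be the n×n matrix with entries c_{j−k}, where c_0 = 1 − α/(πn) and c_k = −sin(kα/n)/(πk) for k ≠ 0 (these are the Fourier coefficients of the characteristic function of the arc {e^{iθ} : α/n < θ < 2π − α/n}). Then det T_n(χ_{α/n}) = (ρ_{α,n})^{n²} · det H_n[b_{α,n}]. -/

import Mathlib

open Filter MeasureTheory

noncomputable section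

/-- The real Hankel-matrix entry `(1/π) ∫_{-1}^1 b(x)(2x)^e dx`. -/
def bmomR (b : ℝ → ℝ) (e : ℕ) : ℝ :=
  (1 / Real.pi) * ∫ x in (-1:ℝ)..1, b x * (2 * x) ^ e

private def Aent (s j p : ℕ) : ℝ :=
  if s - j / 2 ≤ p then (j.choose (p - (s - j / 2)) : ℝ) else 0

private lemma aux_re_mul_exp (r t : ℝ) :
    (((r : ℝ) : ℂ) * Complex.exp ((t : ℂ) * Complex.I)).re = r * Real.cos t := by
  simp [Complex.mul_re, Complex.exp_ofReal_mul_I_re]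

private lemma aux_exp_pow (m : ℕ) (t : ℝ) :
    Complex.exp ((t : ℂ) * Complex.I) ^ m
      = Complex.exp ((((m : ℝ) * t : ℝ) : ℂ) * Complex.I) := by
  rw [← Complex.exp_nat_mul]
  congr 1
  push_cast
  ring

private lemma aux_exp_mul_exp (a b : ℝ) :
    Complex.exp ((a : ℂ) * Complex.I) * Complex.exp ((b : ℂ) * Complex.I)
      = Complex.exp (((a + b : ℝ) : ℂ) * Complex.I) := by
  rw [← Complex.exp_add]
  congr 1
  push_cast
  ring

private lemma aux_one_add_exp_sq (t : ℝ) :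
    1 + Complex.exp ((t : ℂ) * Complex.I) ^ 2
      = 2 * ((Real.cos t : ℝ) : ℂ) * Complex.exp ((t : ℂ) * Complex.I) := by
  rw [Complex.exp_mul_I, Complex.ofReal_cos]
  have h1 := Complex.sin_sq_add_cos_sq (t : ℂ)
  have h2 : Complex.I ^ 2 = -1 := Complex.I_sq
  linear_combination (-1 : ℂ) * h1 + (Complex.sin (t : ℂ)) ^ 2 * h2

private lemma aux_sumA (j d n : ℕ) (h : d + j + 1 ≤ n) (x : ℂ) :
    ∑ p ∈ Finset.range n, (if d ≤ p then ((j.choose (p - d) : ℝ) : ℂ) else 0) * x ^ p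
      = x ^ d * (1 + x) ^ j := by
  rw [Finset.range_eq_Ico, ← Finset.sum_Ico_consecutive _ (Nat.zero_le d) (by omega : d ≤ n)]
  have h0 : ∑ p ∈ Finset.Ico 0 d,
      (if d ≤ p then ((j.choose (p - d) : ℝ) : ℂ) else 0) * x ^ p = 0 := by
    apply Finset.sum_eq_zero
    intro p hp
    rw [Finset.mem_Ico] at hp
    rw [if_neg (by omega)]
    ring
  have h1 : ∑ p ∈ Finset.Ico d n,
      (if d ≤ p then ((j.choose (p - d) : ℝ) : ℂ) else 0) * x ^ p
      = ∑ t ∈ Finset.range (n - d), ((j.choose t : ℝ) : ℂ) * x ^ (d + t) := by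
    rw [Finset.sum_Ico_eq_sum_range]
    apply Finset.sum_congr rfl
    intro t _
    rw [if_pos (by omega), Nat.add_sub_cancel_left]
  have h2 : ∑ t ∈ Finset.range (n - d), ((j.choose t : ℝ) : ℂ) * x ^ (d + t)
      = ∑ t ∈ Finset.range (j + 1), ((j.choose t : ℝ) : ℂ) * x ^ (d + t) := by
    symm
    apply Finset.sum_subset
    · intro t ht
      simp only [Finset.mem_range] at *
      omega
    · intro t _ hnt
      simp only [Finset.mem_range] at hnt
      rw [Nat.choose_eq_zero_of_lt (by omega)]
      simp
  rw [h0, zero_add, h1, h2, show (1 + x) = (x + 1) by ring, add_pow, Finset.mul_sum]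
  apply Finset.sum_congr rfl
  intro t _
  rw [pow_add]
  push_cast
  ring

private lemma aux_keyRe (n s j k : ℕ) (hj2 : j / 2 ≤ s) (hk2 : k / 2 ≤ s)
    (hj1 : s - j / 2 + j + 1 ≤ n) (hk1 : s - k / 2 + k + 1 ≤ n) (φ : ℝ) :
    ∑ p ∈ Finset.range n, ∑ q ∈ Finset.range n,
        Aent s j p * Aent s k q * Real.cos (2 * p * φ - 2 * q * φ)
      = (2 * Real.cos φ) ^ (j + k) * (if j % 2 = k % 2 then 1 else Real.cos φ) := by
  set w : ℂ := Complex.exp ((φ : ℂ) * Complex.I) with hwdef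
  set v : ℂ := Complex.exp (((-φ : ℝ) : ℂ) * Complex.I) with hvdef
  have hwv : w * v = 1 := by
    rw [hwdef, hvdef, show ((φ:ℝ):ℂ) = (((φ:ℝ):ℝ):ℂ) from rfl, aux_exp_mul_exp]
    norm_num
  have hterm : ∀ p q : ℕ,
      Aent s j p * Aent s k q * Real.cos (2 * p * φ - 2 * q * φ)
        = (((Aent s j p : ℝ) : ℂ) * (w ^ 2) ^ p * (((Aent s k q : ℝ) : ℂ) * (v ^ 2) ^ q)).re := by
    intro p q
    have e1 : (w ^ 2) ^ p = Complex.exp ((((2 * p : ℕ) : ℝ) * φ : ℝ) * Complex.I) := by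
      rw [← pow_mul, hwdef, aux_exp_pow]
    have e2 : (v ^ 2) ^ q = Complex.exp ((((2 * q : ℕ) : ℝ) * (-φ) : ℝ) * Complex.I) := by
      rw [← pow_mul, hvdef, aux_exp_pow]
    have e3 : (((Aent s j p : ℝ) : ℂ) * (w ^ 2) ^ p * (((Aent s k q : ℝ) : ℂ) * (v ^ 2) ^ q))
        = ((Aent s j p * Aent s k q : ℝ) : ℂ) *
          Complex.exp (((((2 * p : ℕ) : ℝ) * φ + ((2 * q : ℕ) : ℝ) * (-φ) : ℝ) : ℂ) * Complex.I) := by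
      rw [e1, e2, ← aux_exp_mul_exp]
      push_cast
      ring
    rw [e3, aux_re_mul_exp]
    congr 1
    push_cast
    ring_nf
  have hsum : ∑ p ∈ Finset.range n, ∑ q ∈ Finset.range n,
      Aent s j p * Aent s k q * Real.cos (2 * p * φ - 2 * q * φ)
      = ((∑ p ∈ Finset.range n, ((Aent s j p : ℝ) : ℂ) * (w ^ 2) ^ p) *
         (∑ q ∈ Finset.range n, ((Aent s k q : ℝ) : ℂ) * (v ^ 2) ^ q)).re := by
    rw [Finset.sum_mul_sum, Complex.re_sum]
    apply Finset.sum_congr rfl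
    intro p _
    rw [Complex.re_sum]
    apply Finset.sum_congr rfl
    intro q _
    exact hterm p q
  have hU : ∑ p ∈ Finset.range n, ((Aent s j p : ℝ) : ℂ) * (w ^ 2) ^ p
      = (w ^ 2) ^ (s - j / 2) * (1 + w ^ 2) ^ j := by
    simpa [Aent, apply_ite] using aux_sumA j (s - j / 2) n hj1 (w ^ 2)
  have hV : ∑ q ∈ Finset.range n, ((Aent s k q : ℝ) : ℂ) * (v ^ 2) ^ q
      = (v ^ 2) ^ (s - k / 2) * (1 + v ^ 2) ^ k := by
    simpa [Aent, apply_ite] using aux_sumA k (s - k / 2) n hk1 (v ^ 2)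
  have h1w : (1 : ℂ) + w ^ 2 = 2 * ((Real.cos φ : ℝ) : ℂ) * w := aux_one_add_exp_sq φ
  have h1v : (1 : ℂ) + v ^ 2 = 2 * ((Real.cos φ : ℝ) : ℂ) * v := by
    have h := aux_one_add_exp_sq (-φ)
    rwa [Real.cos_neg] at h
  have hwj : (w ^ 2) ^ (s - j / 2) * w ^ j = w ^ (2 * s) * w ^ (j % 2) := by
    rw [← pow_mul, ← pow_add, ← pow_add]
    congr 1
    omega
  have hvk : (v ^ 2) ^ (s - k / 2) * v ^ k = v ^ (2 * s) * v ^ (k % 2) := by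
    rw [← pow_mul, ← pow_add, ← pow_add]
    congr 1
    omega
  have hw2s : w ^ (2 * s) * v ^ (2 * s) = 1 := by rw [← mul_pow, hwv, one_pow]
  have hprod : (∑ p ∈ Finset.range n, ((Aent s j p : ℝ) : ℂ) * (w ^ 2) ^ p) *
      (∑ q ∈ Finset.range n, ((Aent s k q : ℝ) : ℂ) * (v ^ 2) ^ q)
      = (((2 * Real.cos φ) ^ (j + k) : ℝ) : ℂ) * (w ^ (j % 2) * v ^ (k % 2)) := by
    calc (∑ p ∈ Finset.range n, ((Aent s j p : ℝ) : ℂ) * (w ^ 2) ^ p) *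
        (∑ q ∈ Finset.range n, ((Aent s k q : ℝ) : ℂ) * (v ^ 2) ^ q)
        = ((w ^ 2) ^ (s - j / 2) * w ^ j) * ((v ^ 2) ^ (s - k / 2) * v ^ k) *
            ((2 * ((Real.cos φ : ℝ) : ℂ)) ^ j * (2 * ((Real.cos φ : ℝ) : ℂ)) ^ k) := by
          rw [hU, hV, h1w, h1v]
          ring
      _ = (w ^ (2 * s) * v ^ (2 * s)) * (w ^ (j % 2) * v ^ (k % 2)) *
            (2 * ((Real.cos φ : ℝ) : ℂ)) ^ (j + k) := by
          rw [hwj, hvk, pow_add]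
          ring
      _ = (((2 * Real.cos φ) ^ (j + k) : ℝ) : ℂ) * (w ^ (j % 2) * v ^ (k % 2)) := by
          rw [hw2s]
          push_cast
          ring
  rw [hsum, hprod]
  rcases Nat.mod_two_eq_zero_or_one j with hj | hj <;>
    rcases Nat.mod_two_eq_zero_or_one k with hk | hk <;> rw [hj, hk]
  · simp only [pow_zero, mul_one, Complex.ofReal_re, reduceIte]
  · rw [if_neg (by omega), pow_zero, pow_one, one_mul, hvdef, aux_re_mul_exp, Real.cos_neg]
  · rw [if_neg (by omega), pow_one, pow_zero, mul_one, hwdef, aux_re_mul_exp]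
  · rw [if_pos rfl, pow_one, pow_one, hwv, mul_one, Complex.ofReal_re, mul_one]

private lemma aux_cform (β : ℝ) (hβ0 : 0 < β) (l : ℤ) :
    (if l = 0 then 1 - β / Real.pi else -Real.sin ((l : ℝ) * β) / (Real.pi * l))
      = (1 / Real.pi) * ∫ φ in (β / 2)..(Real.pi - β / 2), Real.cos (2 * (l : ℝ) * φ) := by
  have hπ := Real.pi_pos
  by_cases hl : l = 0
  · subst hl
    rw [if_pos rfl]
    simp only [Int.cast_zero, mul_zero, zero_mul, Real.cos_zero]
    rw [intervalIntegral.integral_const]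
    simp only [smul_eq_mul, mul_one]
    field_simp
    ring
  · rw [if_neg hl]
    have hl' : ((l : ℝ)) ≠ 0 := Int.cast_ne_zero.mpr hl
    have h2l : (2 * (l : ℝ)) ≠ 0 := mul_ne_zero two_ne_zero hl'
    rw [intervalIntegral.integral_comp_mul_left Real.cos h2l, integral_cos,
      smul_eq_mul]
    have c1 : Real.cos (((2 * l : ℤ) : ℝ) * Real.pi) = 1 := by
      rw [show ((2 * l : ℤ) : ℝ) * Real.pi = (l : ℝ) * (2 * Real.pi) by push_cast; ring]
      exact Real.cos_int_mul_two_pi l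
    have hs1 : Real.sin (2 * (l : ℝ) * (Real.pi - β / 2)) = -Real.sin ((l : ℝ) * β) := by
      rw [show 2 * (l : ℝ) * (Real.pi - β / 2) = ((2 * l : ℤ) : ℝ) * Real.pi - (l : ℝ) * β by
        push_cast; ring]
      rw [Real.sin_sub, c1]
      rw [show ((2 * l : ℤ) : ℝ) * Real.pi = ((2 * l : ℤ) : ℝ) * Real.pi from rfl]
      rw [Real.sin_int_mul_pi (2 * l)]
      ring
    have hs2 : Real.sin (2 * (l : ℝ) * (β / 2)) = Real.sin ((l : ℝ) * β) := by
      congr 1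
      ring
    rw [hs1, hs2]
    field_simp
    ring

private lemma aux_vanish_odd (a : ℝ) (m : ℕ) (hm : m % 2 = 1) :
    (∫ φ in a..(Real.pi - a), (2 * Real.cos φ) ^ m) = 0 := by
  have h1 : (∫ φ in a..(Real.pi - a), (fun x => (2 * Real.cos x) ^ m) (Real.pi - φ))
      = ∫ φ in a..(Real.pi - a), (2 * Real.cos φ) ^ m := by
    rw [intervalIntegral.integral_comp_sub_left (fun x => (2 * Real.cos x) ^ m) Real.pi]
    norm_num
  have h2 : (fun φ : ℝ => (fun x => (2 * Real.cos x) ^ m) (Real.pi - φ))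
      = fun φ : ℝ => -((2 * Real.cos φ) ^ m) := by
    funext φ
    simp only
    rw [Real.cos_pi_sub, show 2 * -Real.cos φ = -(2 * Real.cos φ) by ring]
    exact Odd.neg_pow (Nat.odd_iff.mpr hm) _
  rw [h2] at h1
  rw [intervalIntegral.integral_neg] at h1
  linarith

private lemma aux_vanish_even (a : ℝ) (m : ℕ) (hm : m % 2 = 0) :
    (∫ φ in a..(Real.pi - a), (2 * Real.cos φ) ^ m * Real.cos φ) = 0 := by
  have h1 : (∫ φ in a..(Real.pi - a), (fun x => (2 * Real.cos x) ^ m * Real.cos x) (Real.pi - φ))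
      = ∫ φ in a..(Real.pi - a), (2 * Real.cos φ) ^ m * Real.cos φ := by
    rw [intervalIntegral.integral_comp_sub_left
      (fun x => (2 * Real.cos x) ^ m * Real.cos x) Real.pi]
    norm_num
  have h2 : (fun φ : ℝ => (fun x => (2 * Real.cos x) ^ m * Real.cos x) (Real.pi - φ))
      = fun φ : ℝ => -((2 * Real.cos φ) ^ m * Real.cos φ) := by
    funext φ
    simp only
    rw [Real.cos_pi_sub, show 2 * -Real.cos φ = -(2 * Real.cos φ) by ring,
      Even.neg_pow (Nat.even_iff.mpr hm)]
    ring
  rw [h2] at h1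
  rw [intervalIntegral.integral_neg] at h1
  linarith

private lemma aux_subst (β : ℝ) (hβ0 : 0 < β) (hβπ : β < Real.pi) (m : ℕ) :
    ∫ x in (-1 : ℝ)..1,
        Real.sqrt ((1 + Real.cos (β / 2) * x) / (1 - Real.cos (β / 2) * x)) * (2 * x) ^ m
      = (Real.cos (β / 2))⁻¹ ^ (m + 1) *
        ∫ φ in (β / 2)..(Real.pi - β / 2), (2 * Real.cos φ) ^ m * (1 + Real.cos φ) := by
  have hπ := Real.pi_pos
  set a : ℝ := β / 2 with ha
  set b : ℝ := Real.pi - β / 2 with hb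
  set ρ : ℝ := Real.cos (β / 2) with hρ
  have ha0 : 0 < a := by positivity
  have haπ2 : a < Real.pi / 2 := by rw [ha]; linarith
  have hab : a ≤ b := by rw [ha, hb]; linarith
  have hbπ : b < Real.pi := by rw [hb]; linarith
  have hρ0 : 0 < ρ := Real.cos_pos_of_mem_Ioo ⟨by linarith, haπ2⟩
  have hρ1 : ρ < 1 := by
    have h := Real.cos_lt_cos_of_nonneg_of_le_pi (le_refl 0) (by linarith : a ≤ Real.pi) ha0
    rwa [Real.cos_zero] at h
  have hρne : ρ ≠ 0 := ne_of_gt hρ0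
  have hρa : ρ = Real.cos (β / 2) := rfl
  set g : ℝ → ℝ := fun x => Real.sqrt ((1 + ρ * x) / (1 - ρ * x)) * (2 * x) ^ m with hg
  set f : ℝ → ℝ := fun φ => Real.cos φ / ρ with hf
  set f' : ℝ → ℝ := fun φ => -Real.sin φ / ρ with hf'
  have hd : ∀ x ∈ Set.uIcc a b, HasDerivAt f (f' x) x := fun x _ =>
    (Real.hasDerivAt_cos x).div_const ρ
  have hc : ContinuousOn f' (Set.uIcc a b) :=
    ((Real.continuous_sin.neg).div_const ρ).continuousOn
  have himg : f '' Set.uIcc a b ⊆ Set.Icc (-1 : ℝ) 1 := by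
    rintro - ⟨x, hx, rfl⟩
    rw [Set.uIcc_of_le hab, Set.mem_Icc] at hx
    have hx0 : 0 ≤ x := by linarith
    have hcu : Real.cos x ≤ ρ := by
      rw [hρ, ← ha]
      exact Real.cos_le_cos_of_nonneg_of_le_pi (le_of_lt ha0) (by linarith) hx.1
    have hcl : -ρ ≤ Real.cos x := by
      have h2 : Real.cos b ≤ Real.cos x :=
        Real.cos_le_cos_of_nonneg_of_le_pi hx0 (le_of_lt hbπ) hx.2
      have h3 : Real.cos b = -ρ := by
        rw [hb, hρ, ← ha, show Real.pi - a = Real.pi - a from rfl, Real.cos_pi_sub]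
      linarith
    constructor
    · rw [hf]
      simp only
      rw [le_div_iff₀ hρ0]
      linarith
    · rw [hf]
      simp only
      rw [div_le_iff₀ hρ0]
      linarith
  have hgc : ContinuousOn g (Set.Icc (-1 : ℝ) 1) := by
    apply ContinuousOn.mul
    · apply Real.continuous_sqrt.comp_continuousOn
      apply ContinuousOn.div
      · fun_prop
      · fun_prop
      · intro x hx
        rw [Set.mem_Icc] at hx
        nlinarith
    · fun_prop
  have key := intervalIntegral.integral_comp_smul_deriv' hd hc (hgc.mono himg)
  have hfa : f a = 1 := by rw [hf]; simp only; rw [hρ, ← ha, div_self hρne]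
  have hfb : f b = -1 := by
    rw [hf, hb]
    simp only
    rw [show Real.pi - β / 2 = Real.pi - a from rfl, Real.cos_pi_sub, hρ, ← ha]
    rw [neg_div, div_self (show Real.cos a ≠ 0 from hρne)]
  have hpt : ∀ φ ∈ Set.uIcc a b,
      f' φ • (g ∘ f) φ = -(ρ⁻¹ ^ (m + 1) * ((2 * Real.cos φ) ^ m * (1 + Real.cos φ))) := by
    intro φ hφ
    rw [Set.uIcc_of_le hab, Set.mem_Icc] at hφ
    have hsφ : 0 < Real.sin φ := Real.sin_pos_of_pos_of_lt_pi (by linarith) (by linarith)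
    have hcφ1 : Real.cos φ < 1 := by
      have h := Real.cos_le_cos_of_nonneg_of_le_pi (le_of_lt ha0) (by linarith) hφ.1
      rw [← hρa] at h
      linarith
    have hcφm : -1 < Real.cos φ := by
      have h2 : Real.cos b ≤ Real.cos φ :=
        Real.cos_le_cos_of_nonneg_of_le_pi (by linarith) (le_of_lt hbπ) hφ.2
      have h3 : Real.cos b = -ρ := by rw [hb, show Real.pi - β / 2 = Real.pi - a from rfl,
        Real.cos_pi_sub, hρ, ha]
      linarith
    have hsq : Real.sqrt ((1 + Real.cos φ) / (1 - Real.cos φ))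
        = (1 + Real.cos φ) / Real.sin φ := by
      rw [show (1 + Real.cos φ) / (1 - Real.cos φ) = ((1 + Real.cos φ) / Real.sin φ) ^ 2 by
        have hs2 := Real.sin_sq_add_cos_sq φ
        have h1c : 1 - Real.cos φ ≠ 0 := by linarith
        have hsne : Real.sin φ ≠ 0 := ne_of_gt hsφ
        field_simp
        linear_combination (1 + Real.cos φ) * hs2]
      exact Real.sqrt_sq (div_nonneg (by linarith) (le_of_lt hsφ))
    rw [hf', hg, hf]
    simp only [Function.comp, smul_eq_mul]
    rw [show ρ * (Real.cos φ / ρ) = Real.cos φ by field_simp, hsq]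
    field_simp
    linear_combination (Real.cos φ * Real.cos φ ^ m * ρ⁻¹ ^ m * 2 ^ m +
      Real.cos φ ^ m * ρ⁻¹ ^ m * 2 ^ m) * (mul_inv_cancel₀ hρne)
  rw [intervalIntegral.integral_congr hpt] at key
  rw [intervalIntegral.integral_neg, intervalIntegral.integral_const_mul] at key
  rw [hfa, hfb] at key
  have key2 : (∫ x in (1 : ℝ)..(-1), g x) = - ∫ x in (-1 : ℝ)..1, g x :=
    intervalIntegral.integral_symm (-1) 1
  rw [key2] at key
  have := neg_injective key
  rw [← this]

private lemma aux_mom (β : ℝ) (hβ0 : 0 < β) (hβπ : β < Real.pi) (m : ℕ) :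
    Real.cos (β / 2) ^ (m + 1) * bmomR (fun x =>
        Real.sqrt ((1 + Real.cos (β / 2) * x) / (1 - Real.cos (β / 2) * x))) m
      = (1 / Real.pi) *
        ∫ φ in (β / 2)..(Real.pi - β / 2), (2 * Real.cos φ) ^ m * (1 + Real.cos φ) := by
  have hπ := Real.pi_pos
  have hρ0 : 0 < Real.cos (β / 2) :=
    Real.cos_pos_of_mem_Ioo ⟨by linarith, by linarith⟩
  rw [bmomR, aux_subst β hβ0 hβπ m]
  have hcan : Real.cos (β / 2) ^ (m + 1) * (Real.cos (β / 2))⁻¹ ^ (m + 1) = 1 := by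
    rw [← mul_pow, mul_inv_cancel₀ (ne_of_gt hρ0), one_pow]
  calc Real.cos (β / 2) ^ (m + 1) * (1 / Real.pi * ((Real.cos (β / 2))⁻¹ ^ (m + 1) *
        ∫ φ in (β / 2)..(Real.pi - β / 2), (2 * Real.cos φ) ^ m * (1 + Real.cos φ)))
      = (Real.cos (β / 2) ^ (m + 1) * (Real.cos (β / 2))⁻¹ ^ (m + 1)) *
        (1 / Real.pi * ∫ φ in (β / 2)..(Real.pi - β / 2),
          (2 * Real.cos φ) ^ m * (1 + Real.cos φ)) := by ring
    _ = 1 / Real.pi * ∫ φ in (β / 2)..(Real.pi - β / 2),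
          (2 * Real.cos φ) ^ m * (1 + Real.cos φ) := by rw [hcan, one_mul]

private lemma aux_cform2 (β : ℝ) (hβ0 : 0 < β) (p q : ℕ) :
    (if (p : ℤ) = (q : ℤ) then 1 - β / Real.pi
     else -Real.sin ((((p : ℤ) - (q : ℤ) : ℤ) : ℝ) * β) /
       (Real.pi * (((p : ℤ) - (q : ℤ) : ℤ) : ℝ)))
      = (1 / Real.pi) * ∫ φ in (β / 2)..(Real.pi - β / 2),
          Real.cos (2 * (p : ℝ) * φ - 2 * (q : ℝ) * φ) := by
  have h := aux_cform β hβ0 ((p : ℤ) - (q : ℤ))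
  have hin : (fun φ : ℝ => Real.cos (2 * (((p : ℤ) - (q : ℤ) : ℤ) : ℝ) * φ))
      = fun φ : ℝ => Real.cos (2 * (p : ℝ) * φ - 2 * (q : ℝ) * φ) := by
    funext φ
    congr 1
    push_cast
    ring
  rw [hin] at h
  rw [← h]
  by_cases hc : (p : ℤ) = (q : ℤ)
  · rw [if_pos hc, if_pos (sub_eq_zero.mpr hc)]
  · rw [if_neg hc, if_neg (fun h0 => hc (sub_eq_zero.mp h0))]

set_option maxHeartbeats 1000000 in
private lemma aux_entry (α : ℝ) (hα : 0 < α) (n : ℕ) (hn : 1 ≤ n) (hαn : α < n * Real.pi)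
    (jj kk : Fin n) :
    ∑ p : Fin n, ∑ q : Fin n, Aent ((n - 1) / 2) (jj : ℕ) (p : ℕ) *
        Aent ((n - 1) / 2) (kk : ℕ) (q : ℕ) *
        (if (p : ℤ) = (q : ℤ) then 1 - α / (Real.pi * n)
         else -Real.sin ((((p : ℤ) - (q : ℤ) : ℤ) : ℝ) * α / n) /
           (Real.pi * (((p : ℤ) - (q : ℤ) : ℤ) : ℝ)))
      = Real.cos (α / (2 * n)) ^ ((jj : ℕ) + (kk : ℕ) + 1) *
        bmomR (fun x => Real.sqrt ((1 + Real.cos (α / (2 * n)) * x) /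
          (1 - Real.cos (α / (2 * n)) * x))) ((jj : ℕ) + (kk : ℕ)) := by
  have hπ := Real.pi_pos
  have hn0 : (0 : ℝ) < n := by exact_mod_cast hn
  have hβ0 : 0 < α / n := div_pos hα hn0
  have hβπ : α / n < Real.pi := by
    rw [div_lt_iff₀ hn0]
    linarith [hαn]
  set s : ℕ := (n - 1) / 2 with hs
  have hjlt := jj.isLt
  have hklt := kk.isLt
  have hj2 : (jj : ℕ) / 2 ≤ s := by omega
  have hk2 : (kk : ℕ) / 2 ≤ s := by omega
  have hj1 : s - (jj : ℕ) / 2 + (jj : ℕ) + 1 ≤ n := by omega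
  have hk1 : s - (kk : ℕ) / 2 + (kk : ℕ) + 1 ≤ n := by omega
  have hT' : ∀ p q : Fin n,
      (if (p : ℤ) = (q : ℤ) then 1 - α / (Real.pi * n)
       else -Real.sin ((((p : ℤ) - (q : ℤ) : ℤ) : ℝ) * α / n) /
         (Real.pi * (((p : ℤ) - (q : ℤ) : ℤ) : ℝ)))
      = (1 / Real.pi) * ∫ φ in (α / n / 2)..(Real.pi - α / n / 2),
          Real.cos (2 * ((p : ℕ) : ℝ) * φ - 2 * ((q : ℕ) : ℝ) * φ) := by
    intro p q
    rw [← aux_cform2 (α / n) hβ0 (p : ℕ) (q : ℕ)]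
    by_cases h : ((p : ℕ) : ℤ) = ((q : ℕ) : ℤ)
    · rw [if_pos h, if_pos h, div_div, mul_comm (n : ℝ) Real.pi]
    · rw [if_neg h, if_neg h, mul_div_assoc]
  have hFint : ∀ p q : Fin n, IntervalIntegrable (fun φ =>
      (1 / Real.pi) * (Aent s (jj : ℕ) (p : ℕ) * Aent s (kk : ℕ) (q : ℕ) *
        Real.cos (2 * ((p : ℕ) : ℝ) * φ - 2 * ((q : ℕ) : ℝ) * φ)))
      volume (α / n / 2) (Real.pi - α / n / 2) := by
    intro p q
    apply Continuous.intervalIntegrable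
    fun_prop
  have step2 : ∑ p : Fin n, ∑ q : Fin n, Aent s (jj : ℕ) (p : ℕ) * Aent s (kk : ℕ) (q : ℕ) *
      (if (p : ℤ) = (q : ℤ) then 1 - α / (Real.pi * n)
       else -Real.sin ((((p : ℤ) - (q : ℤ) : ℤ) : ℝ) * α / n) /
         (Real.pi * (((p : ℤ) - (q : ℤ) : ℤ) : ℝ)))
      = ∑ p : Fin n, ∑ q : Fin n, ∫ φ in (α / n / 2)..(Real.pi - α / n / 2),
          (1 / Real.pi) * (Aent s (jj : ℕ) (p : ℕ) * Aent s (kk : ℕ) (q : ℕ) *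
            Real.cos (2 * ((p : ℕ) : ℝ) * φ - 2 * ((q : ℕ) : ℝ) * φ)) := by
    apply Finset.sum_congr rfl
    intro p _
    apply Finset.sum_congr rfl
    intro q _
    rw [hT' p q, intervalIntegral.integral_const_mul, intervalIntegral.integral_const_mul]
    ring
  have step3 : ∑ p : Fin n, ∑ q : Fin n, (∫ φ in (α / n / 2)..(Real.pi - α / n / 2),
        (1 / Real.pi) * (Aent s (jj : ℕ) (p : ℕ) * Aent s (kk : ℕ) (q : ℕ) *
          Real.cos (2 * ((p : ℕ) : ℝ) * φ - 2 * ((q : ℕ) : ℝ) * φ)))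
      = ∫ φ in (α / n / 2)..(Real.pi - α / n / 2), ∑ p : Fin n, ∑ q : Fin n,
          (1 / Real.pi) * (Aent s (jj : ℕ) (p : ℕ) * Aent s (kk : ℕ) (q : ℕ) *
            Real.cos (2 * ((p : ℕ) : ℝ) * φ - 2 * ((q : ℕ) : ℝ) * φ)) := by
    have hinner : ∀ p : Fin n, ∑ q : Fin n, (∫ φ in (α / n / 2)..(Real.pi - α / n / 2),
        (1 / Real.pi) * (Aent s (jj : ℕ) (p : ℕ) * Aent s (kk : ℕ) (q : ℕ) *
          Real.cos (2 * ((p : ℕ) : ℝ) * φ - 2 * ((q : ℕ) : ℝ) * φ)))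
        = ∫ φ in (α / n / 2)..(Real.pi - α / n / 2), ∑ q : Fin n,
            (1 / Real.pi) * (Aent s (jj : ℕ) (p : ℕ) * Aent s (kk : ℕ) (q : ℕ) *
              Real.cos (2 * ((p : ℕ) : ℝ) * φ - 2 * ((q : ℕ) : ℝ) * φ)) :=
      fun p => (intervalIntegral.integral_finset_sum (fun q _ => hFint p q)).symm
    rw [Finset.sum_congr rfl (fun p _ => hinner p)]
    refine (intervalIntegral.integral_finset_sum (fun p _ => ?_)).symm
    apply Continuous.intervalIntegrable
    apply continuous_finset_sum
    intro q _
    fun_prop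
  have step4 : (∫ φ in (α / n / 2)..(Real.pi - α / n / 2), ∑ p : Fin n, ∑ q : Fin n,
        (1 / Real.pi) * (Aent s (jj : ℕ) (p : ℕ) * Aent s (kk : ℕ) (q : ℕ) *
          Real.cos (2 * ((p : ℕ) : ℝ) * φ - 2 * ((q : ℕ) : ℝ) * φ)))
      = (1 / Real.pi) * ∫ φ in (α / n / 2)..(Real.pi - α / n / 2),
          (2 * Real.cos φ) ^ ((jj : ℕ) + (kk : ℕ)) *
          (if (jj : ℕ) % 2 = (kk : ℕ) % 2 then 1 else Real.cos φ) := by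
    rw [← intervalIntegral.integral_const_mul]
    apply intervalIntegral.integral_congr
    intro φ _
    beta_reduce
    rw [← aux_keyRe n s (jj : ℕ) (kk : ℕ) hj2 hk2 hj1 hk1 φ]
    rw [Finset.mul_sum]
    rw [Fin.sum_univ_eq_sum_range (fun p => ∑ q : Fin n,
      (1 / Real.pi) * (Aent s (jj : ℕ) p * Aent s (kk : ℕ) (q : ℕ) *
        Real.cos (2 * (p : ℝ) * φ - 2 * ((q : ℕ) : ℝ) * φ))) n]
    apply Finset.sum_congr rfl
    intro p _
    rw [Finset.mul_sum]
    exact Fin.sum_univ_eq_sum_range (fun q =>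
      (1 / Real.pi) * (Aent s (jj : ℕ) p * Aent s (kk : ℕ) q *
        Real.cos (2 * (p : ℝ) * φ - 2 * (q : ℝ) * φ))) n
  rw [step2, step3, step4]
  rw [show Real.cos (α / (2 * n)) = Real.cos (α / n / 2) by rw [div_div]; ring_nf]
  rw [aux_mom (α / n) hβ0 hβπ ((jj : ℕ) + (kk : ℕ))]
  have hc1 : IntervalIntegrable (fun φ => (2 * Real.cos φ) ^ ((jj : ℕ) + (kk : ℕ)))
      volume (α / n / 2) (Real.pi - α / n / 2) := by
    apply Continuous.intervalIntegrable
    fun_prop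
  have hc2 : IntervalIntegrable
      (fun φ => (2 * Real.cos φ) ^ ((jj : ℕ) + (kk : ℕ)) * Real.cos φ)
      volume (α / n / 2) (Real.pi - α / n / 2) := by
    apply Continuous.intervalIntegrable
    fun_prop
  have hadd : (∫ φ in (α / n / 2)..(Real.pi - α / n / 2),
        (2 * Real.cos φ) ^ ((jj : ℕ) + (kk : ℕ)) * (1 + Real.cos φ))
      = (∫ φ in (α / n / 2)..(Real.pi - α / n / 2),
          (2 * Real.cos φ) ^ ((jj : ℕ) + (kk : ℕ)))
        + ∫ φ in (α / n / 2)..(Real.pi - α / n / 2),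
            (2 * Real.cos φ) ^ ((jj : ℕ) + (kk : ℕ)) * Real.cos φ := by
    rw [← intervalIntegral.integral_add hc1 hc2]
    apply intervalIntegral.integral_congr
    intro φ _
    ring
  rw [hadd]
  by_cases hpar : (jj : ℕ) % 2 = (kk : ℕ) % 2
  · simp only [if_pos hpar]
    have hv : (∫ φ in (α / n / 2)..(Real.pi - α / n / 2),
        (2 * Real.cos φ) ^ ((jj : ℕ) + (kk : ℕ)) * Real.cos φ) = 0 :=
      aux_vanish_even (α / n / 2) _ (by omega)
    rw [hv, add_zero]
    simp only [mul_one]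
  · simp only [if_neg hpar]
    have hv : (∫ φ in (α / n / 2)..(Real.pi - α / n / 2),
        (2 * Real.cos φ) ^ ((jj : ℕ) + (kk : ℕ))) = 0 :=
      aux_vanish_odd (α / n / 2) _ (by omega)
    rw [hv, zero_add]

private lemma aux_detA (n : ℕ) (hn : 1 ≤ n) :
    (Matrix.of fun j p : Fin n => Aent ((n - 1) / 2) (j : ℕ) (p : ℕ)).det *
      (Matrix.of fun j p : Fin n => Aent ((n - 1) / 2) (j : ℕ) (p : ℕ)).det = 1 := by
  set s : ℕ := (n - 1) / 2 with hs
  set A : Matrix (Fin n) (Fin n) ℝ :=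
    Matrix.of fun j p : Fin n => Aent s (j : ℕ) (p : ℕ) with hA
  have hbound : ∀ kk : Fin n,
      (if (kk : ℕ) % 2 = 0 then s - (kk : ℕ) / 2 else s + ((kk : ℕ) + 1) / 2) < n := by
    intro kk
    have := kk.isLt
    split_ifs <;> omega
  set σf : Fin n → Fin n := fun kk =>
    ⟨if (kk : ℕ) % 2 = 0 then s - (kk : ℕ) / 2 else s + ((kk : ℕ) + 1) / 2,
      hbound kk⟩ with hσf
  have hinj : Function.Injective σf := by
    intro x y hxy
    have hx := x.isLt
    have hy := y.isLt
    have h := congrArg Fin.val hxy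
    simp only [hσf] at h
    apply Fin.ext
    split_ifs at h <;> omega
  let σ : Equiv.Perm (Fin n) := Equiv.ofBijective σf (Finite.injective_iff_bijective.mp hinj)
  have hσval : ∀ kk : Fin n, ((σ kk : Fin n) : ℕ)
      = if (kk : ℕ) % 2 = 0 then s - (kk : ℕ) / 2 else s + ((kk : ℕ) + 1) / 2 :=
    fun kk => rfl
  have htri : ∀ jj kk : Fin n, jj < kk → A jj (σ kk) = 0 := by
    intro jj kk h
    have hj := jj.isLt
    have hk := kk.isLt
    have hlt : (jj : ℕ) < (kk : ℕ) := h
    have hv := hσval kk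
    show Aent s (jj : ℕ) ((σ kk : Fin n) : ℕ) = 0
    unfold Aent
    by_cases hp : (kk : ℕ) % 2 = 0
    · rw [if_pos hp] at hv
      rw [if_neg (by omega)]
    · rw [if_neg hp] at hv
      rw [if_pos (by omega), Nat.choose_eq_zero_of_lt (by omega), Nat.cast_zero]
  have hdiag : ∀ jj : Fin n, A jj (σ jj) = 1 := by
    intro jj
    have hj := jj.isLt
    have hv := hσval jj
    show Aent s (jj : ℕ) ((σ jj : Fin n) : ℕ) = 1
    unfold Aent
    by_cases hp : (jj : ℕ) % 2 = 0
    · rw [if_pos hp] at hv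
      rw [if_pos (by omega),
        show ((σ jj : Fin n) : ℕ) - (s - (jj : ℕ) / 2) = 0 by omega,
        Nat.choose_zero_right, Nat.cast_one]
    · rw [if_neg hp] at hv
      rw [if_pos (by omega),
        show ((σ jj : Fin n) : ℕ) - (s - (jj : ℕ) / 2) = (jj : ℕ) by omega,
        Nat.choose_self, Nat.cast_one]
  have hBdet : (A.submatrix id ⇑σ).det = 1 := by
    rw [Matrix.det_of_lowerTriangular (A.submatrix id ⇑σ)
      (fun i j hij => htri i j (by exact_mod_cast hij))]
    apply Finset.prod_eq_one
    intro i _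
    exact hdiag i
  have hperm : (A.submatrix id ⇑σ) = (A.transpose.submatrix ⇑σ id).transpose := by
    ext i j
    rfl
  have hsign := Matrix.det_permute σ A.transpose
  have h1 : (1 : ℝ) = ((Equiv.Perm.sign σ : ℤ) : ℝ) * A.det := by
    calc (1 : ℝ) = (A.submatrix id ⇑σ).det := hBdet.symm
      _ = (A.transpose.submatrix ⇑σ id).transpose.det := by rw [hperm]
      _ = (A.transpose.submatrix ⇑σ id).det := Matrix.det_transpose _
      _ = ((Equiv.Perm.sign σ : ℤ) : ℝ) * A.transpose.det := by exact_mod_cast hsign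
      _ = ((Equiv.Perm.sign σ : ℤ) : ℝ) * A.det := by rw [Matrix.det_transpose]
  rcases Int.units_eq_one_or (Equiv.Perm.sign σ) with hu | hu <;> rw [hu] at h1 <;>
    push_cast at h1 <;> nlinarith [h1]

private lemma aux_detG (n : ℕ) (hn : 1 ≤ n) (ρ : ℝ) (H : Matrix (Fin n) (Fin n) ℝ) :
    (Matrix.of fun j k : Fin n => ρ ^ ((j : ℕ) + (k : ℕ) + 1) * H j k).det
      = ρ ^ (n ^ 2) * H.det := by
  have hfac : (Matrix.of fun j k : Fin n => ρ ^ ((j : ℕ) + (k : ℕ) + 1) * H j k)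
      = Matrix.diagonal (fun j : Fin n => ρ ^ ((j : ℕ) + 1)) * H *
        Matrix.diagonal (fun k : Fin n => ρ ^ (k : ℕ)) := by
    ext j k
    rw [Matrix.mul_diagonal, Matrix.diagonal_mul, Matrix.of_apply,
      show (j : ℕ) + (k : ℕ) + 1 = ((j : ℕ) + 1) + (k : ℕ) by omega, pow_add]
    ring
  rw [hfac, Matrix.det_mul, Matrix.det_mul, Matrix.det_diagonal, Matrix.det_diagonal,
    Finset.prod_pow_eq_pow_sum, Finset.prod_pow_eq_pow_sum]
  have e1 : ∑ j : Fin n, ((j : ℕ) + 1) = (∑ i ∈ Finset.range n, i) + n := by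
    rw [Fin.sum_univ_eq_sum_range (fun i => i + 1) n, Finset.sum_add_distrib,
      Finset.sum_const, Finset.card_range, smul_eq_mul, mul_one]
  have e2 : ∑ j : Fin n, (j : ℕ) = ∑ i ∈ Finset.range n, i :=
    Fin.sum_univ_eq_sum_range (fun i => i) n
  obtain ⟨t, rfl⟩ : ∃ t, n = t + 1 := ⟨n - 1, by omega⟩
  have e3 := Finset.sum_range_id_mul_two (t + 1)
  have e3' : (∑ i ∈ Finset.range (t + 1), i) * 2 = t ^ 2 + t := by
    rw [e3]
    simp only [Nat.add_sub_cancel]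
    ring
  have e4 : ((∑ i ∈ Finset.range (t + 1), i) + (t + 1)) + (∑ i ∈ Finset.range (t + 1), i)
      = (t + 1) ^ 2 := by
    have h5 : (t + 1) ^ 2 = t ^ 2 + t + (t + 1) := by ring
    omega
  rw [e1, e2]
  calc ρ ^ ((∑ i ∈ Finset.range (t + 1), i) + (t + 1)) * H.det *
        ρ ^ (∑ i ∈ Finset.range (t + 1), i)
      = ρ ^ (((∑ i ∈ Finset.range (t + 1), i) + (t + 1)) +
          (∑ i ∈ Finset.range (t + 1), i)) * H.det := by rw [pow_add]; ring
    _ = ρ ^ ((t + 1) ^ 2) * H.det := by rw [e4]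

set_option maxHeartbeats 1000000 in
/-- Let `α > 0`, `n ≥ 1`, `α < nπ`, `ρ_{α,n} = cos(α/(2n))` and
`b_{α,n}(x) = √((1+ρ_{α,n}x)/(1−ρ_{α,n}x))`.  With `T_n(χ_{α/n})` the Toeplitz matrix
with entries `c_{j−k}`, where `c_0 = 1 − α/(πn)`, `c_k = −sin(kα/n)/(πk)` for `k ≠ 0`,
one has `det T_n(χ_{α/n}) = (ρ_{α,n})^{n²} · det H_n[b_{α,n}]`. -/
theorem stmt11 (α : ℝ) (hα : 0 < α) (n : ℕ) (hn : 1 ≤ n) (hαn : α < n * Real.pi) :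
    (Matrix.of fun j k : Fin n =>
        if (j : ℤ) = (k : ℤ) then 1 - α / (Real.pi * n)
        else -Real.sin ((((j : ℤ) - (k : ℤ) : ℤ) : ℝ) * α / n) /
          (Real.pi * (((j : ℤ) - (k : ℤ) : ℤ) : ℝ))).det
      = Real.cos (α / (2 * n)) ^ (n ^ 2) *
        (Matrix.of fun j k : Fin n =>
          bmomR (fun x => Real.sqrt ((1 + Real.cos (α / (2 * n)) * x) /
            (1 - Real.cos (α / (2 * n)) * x))) ((j : ℕ) + k)).det := by
  set ρ : ℝ := Real.cos (α / (2 * n)) with hρdef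
  set T : Matrix (Fin n) (Fin n) ℝ := Matrix.of fun j k : Fin n =>
      if (j : ℤ) = (k : ℤ) then 1 - α / (Real.pi * n)
      else -Real.sin ((((j : ℤ) - (k : ℤ) : ℤ) : ℝ) * α / n) /
        (Real.pi * (((j : ℤ) - (k : ℤ) : ℤ) : ℝ)) with hTdef
  set H : Matrix (Fin n) (Fin n) ℝ := Matrix.of fun j k : Fin n =>
      bmomR (fun x => Real.sqrt ((1 + ρ * x) / (1 - ρ * x))) ((j : ℕ) + k) with hHdef
  show T.det = ρ ^ n ^ 2 * H.det
  set Amat : Matrix (Fin n) (Fin n) ℝ :=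
    Matrix.of fun j p : Fin n => Aent ((n - 1) / 2) (j : ℕ) (p : ℕ) with hAmat
  have hmat : Amat * T * Amat.transpose
      = Matrix.of fun j k : Fin n => ρ ^ ((j : ℕ) + (k : ℕ) + 1) * H j k := by
    ext jj kk
    have step1 : (Amat * T * Amat.transpose) jj kk
        = ∑ p : Fin n, ∑ q : Fin n, Aent ((n - 1) / 2) (jj : ℕ) (p : ℕ) *
            Aent ((n - 1) / 2) (kk : ℕ) (q : ℕ) * T p q := by
      simp only [Matrix.mul_apply, Matrix.transpose_apply, hAmat, Matrix.of_apply]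
      simp_rw [Finset.sum_mul]
      rw [Finset.sum_comm]
      apply Finset.sum_congr rfl
      intro p _
      apply Finset.sum_congr rfl
      intro q _
      ring
    rw [step1]
    have := aux_entry α hα n hn hαn jj kk
    rw [Matrix.of_apply]
    show _ = ρ ^ ((jj : ℕ) + (kk : ℕ) + 1) *
        bmomR (fun x => Real.sqrt ((1 + ρ * x) / (1 - ρ * x))) ((jj : ℕ) + (kk : ℕ))
    rw [← this]
    apply Finset.sum_congr rfl
    intro p _
    apply Finset.sum_congr rfl
    intro q _
    rfl
  have h1 : (Matrix.of fun j k : Fin n => ρ ^ ((j : ℕ) + (k : ℕ) + 1) * H j k).det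
      = Amat.det * T.det * Amat.det := by
    rw [← hmat, Matrix.det_mul, Matrix.det_mul, Matrix.det_transpose]
  have h2 : (Matrix.of fun j k : Fin n => ρ ^ ((j : ℕ) + (k : ℕ) + 1) * H j k).det
      = ρ ^ (n ^ 2) * H.det := aux_detG n hn ρ H
  have h3 := aux_detA n hn
  calc T.det = ((Matrix.of fun j p : Fin n => Aent ((n - 1) / 2) (j : ℕ) (p : ℕ)).det *
        (Matrix.of fun j p : Fin n => Aent ((n - 1) / 2) (j : ℕ) (p : ℕ)).det) * T.det := by
        rw [h3, one_mul]
    _ = Amat.det * T.det * Amat.det := by rw [← hAmat]; ring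
    _ = ρ ^ (n ^ 2) * H.det := by rw [← h1, h2]

end
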